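/- Let $p$ be a prime with $p \equiv 1 \pmod 6$, let $b \in \mathrm{GF}(p)$, and let $a_1, a_2 \in \mathrm{GF}(p)$ be nonzero elements with $a_1^3 = a_2^3$. Then $X^3 + a_1 X + b$ is irreducible over $\mathrm{GF}(p)$ if and only if $X^3 + a_2 X + b$ is irreducible over $\mathrm{GF}(p)$; moreover, if both are irreducible and $X^p \equiv c_2^{(i)} X^2 + c_1^{(i)} X + c_0^{(i)} \pmod{X^3 + a_i X + b}$ for $i = 1, 2$, then $3a_1 \cdot (c_2^{(1)})^{-1} = 3a_2 \cdot (c_2^{(2)})^{-1}$ in $\mathrm{GF}(p)$. -/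

import Mathlib

open Polynomial

private lemma cubic_lin_deg {K : Type*} [Field K] (a b : K) :
    degree (C a * X + C b : K[X]) < (3 : ℕ) :=
  lt_of_le_of_lt degree_linear_le (by norm_num)

private lemma cubic_monic {K : Type*} [Field K] (a b : K) :
    Monic (X ^ 3 + C a * X + C b : K[X]) := by
  rw [add_assoc]; exact monic_X_pow_add (cubic_lin_deg a b)

private lemma cubic_deg {K : Type*} [Field K] (a b : K) :
    degree (X ^ 3 + C a * X + C b : K[X]) = 3 := by
  rw [add_assoc, degree_add_eq_left_of_degree_lt, degree_X_pow]
  · rfl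
  · rw [degree_X_pow]; exact cubic_lin_deg a b

private lemma cubic_natDeg {K : Type*} [Field K] (a b : K) :
    natDegree (X ^ 3 + C a * X + C b : K[X]) = 3 :=
  natDegree_eq_of_degree_eq_some (cubic_deg a b)

private lemma cubic_irr_iff {K : Type*} [Field K] (a b : K) :
    Irreducible (X ^ 3 + C a * X + C b : K[X]) ↔
      ∀ x : K, eval x (X ^ 3 + C a * X + C b) ≠ 0 := by
  rw [(cubic_monic a b).irreducible_iff_roots_eq_zero_of_degree_le_three
      (by rw [cubic_natDeg]; norm_num) (by rw [cubic_natDeg]),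
    Multiset.eq_zero_iff_forall_notMem]
  constructor
  · intro h x hx
    exact h x (by rw [mem_roots ((cubic_monic a b).ne_zero)]; exact hx)
  · intro h x hx
    exact h x ((mem_roots ((cubic_monic a b).ne_zero)).1 hx)

/-- For `p ≡ 1 (mod 6)` and nonzero `a₁, a₂ ∈ GF(p)` with `a₁³ = a₂³`, the polynomial
`X³ + a₁X + b` is irreducible iff `X³ + a₂X + b` is, and when both are irreducible,
the two square roots `3aᵢ·(c₂⁽ⁱ⁾)⁻¹` of the discriminant agree. -/
theorem gfp3_sqrt_indep_of_cube_root (p : ℕ) (hp : p.Prime) (hp6 : p % 6 = 1)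
    (b a₁ a₂ : ZMod p) (ha₁ : a₁ ≠ 0) (ha₂ : a₂ ≠ 0) (hcube : a₁ ^ 3 = a₂ ^ 3) :
    (Irreducible (X ^ 3 + C a₁ * X + C b : (ZMod p)[X]) ↔
      Irreducible (X ^ 3 + C a₂ * X + C b : (ZMod p)[X])) ∧
    (Irreducible (X ^ 3 + C a₁ * X + C b : (ZMod p)[X]) →
      Irreducible (X ^ 3 + C a₂ * X + C b : (ZMod p)[X]) →
      ∀ c₀ c₁ c₂ c₀' c₁' c₂' : ZMod p,
        (X : (ZMod p)[X]) ^ p %ₘ (X ^ 3 + C a₁ * X + C b)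
          = C c₂ * X ^ 2 + C c₁ * X + C c₀ →
        (X : (ZMod p)[X]) ^ p %ₘ (X ^ 3 + C a₂ * X + C b)
          = C c₂' * X ^ 2 + C c₁' * X + C c₀' →
        3 * a₁ * c₂⁻¹ = 3 * a₂ * (c₂')⁻¹) := by
  haveI : Fact p.Prime := ⟨hp⟩
  obtain ⟨u, hu0, hu3, hua⟩ : ∃ u : ZMod p, u ≠ 0 ∧ u ^ 3 = 1 ∧ u * a₁ = a₂ := by
    refine ⟨a₂ * a₁⁻¹, mul_ne_zero ha₂ (inv_ne_zero ha₁), ?_, ?_⟩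
    · rw [mul_pow, ← hcube, inv_pow, mul_inv_cancel₀ (pow_ne_zero 3 ha₁)]
    · rw [mul_assoc, inv_mul_cancel₀ ha₁, mul_one]
  have heval : ∀ x : ZMod p,
      eval x (X ^ 3 + C a₂ * X + C b) = eval (u * x) (X ^ 3 + C a₁ * X + C b) := by
    intro x
    simp only [eval_add, eval_mul, eval_pow, eval_X, eval_C]
    rw [mul_pow, hu3, one_mul, show a₁ * (u * x) = a₂ * x by
      rw [← mul_assoc, mul_comm a₁ u, hua]]
  constructor
  · rw [cubic_irr_iff, cubic_irr_iff]
    constructor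
    · intro h x hx
      exact h (u * x) (by rw [← heval]; exact hx)
    · intro h y hy
      refine h (u⁻¹ * y) ?_
      rw [heval, ← mul_assoc, mul_inv_cancel₀ hu0, one_mul]
      exact hy
  · intro _ _ c₀ c₁ c₂ c₀' c₁' c₂' h₁ h₂
    -- u^p = u
    have hup : u ^ p = u := by
      have hk : 6 * (p / 6) + 1 = p := by rw [← hp6]; exact Nat.div_add_mod p 6
      have h1 : u ^ p = u ^ (6 * (p / 6) + 1) := congrArg (u ^ ·) hk.symm
      rw [h1, pow_add, pow_one, pow_mul, show (6 : ℕ) = 3 * 2 from rfl, pow_mul, hu3,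
        one_pow, one_pow, one_mul]
    have hm₁ := cubic_monic a₁ b
    have hm₂ := cubic_monic a₂ b
    set f₁ : (ZMod p)[X] := X ^ 3 + C a₁ * X + C b with hf₁
    set f₂ : (ZMod p)[X] := X ^ 3 + C a₂ * X + C b with hf₂
    have hcomp : f₁.comp (C u * X) = f₂ := by
      rw [hf₁, hf₂]
      simp only [add_comp, mul_comp, pow_comp, X_comp, C_comp, mul_pow, ← C_pow, hu3, C_1,
        one_mul]
      rw [← mul_assoc, ← C_mul, mul_comm a₁ u, hua]
    have hkey : (X : (ZMod p)[X]) ^ p - (C c₂ * X ^ 2 + C c₁ * X + C c₀)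
        = f₁ * ((X : (ZMod p)[X]) ^ p /ₘ f₁) := by
      rw [← h₁]
      have := modByMonic_add_div ((X : (ZMod p)[X]) ^ p) f₁
      linear_combination (norm := ring_nf) -this
    have hkey2 := congrArg (fun g => g.comp (C u * X)) hkey
    simp only [sub_comp, pow_comp, X_comp, add_comp, mul_comp, C_comp, hcomp] at hkey2
    rw [mul_pow, mul_pow,
      show (C u : (ZMod p)[X]) ^ p = C u by rw [← C_pow, hup]] at hkey2
    have hCu : (C u : (ZMod p)[X]) * C u⁻¹ = 1 := by
      rw [← C_mul, mul_inv_cancel₀ hu0, C_1]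
    have hdvd : f₂ ∣ (X : (ZMod p)[X]) ^ p
        - (C (c₂ * u) * X ^ 2 + C c₁ * X + C (c₀ * u⁻¹)) := by
      refine ⟨C u⁻¹ * ((X : (ZMod p)[X]) ^ p /ₘ f₁).comp (C u * X), ?_⟩
      simp only [C_mul]
      linear_combination (C u⁻¹ : (ZMod p)[X]) * hkey2 +
        (-(X : (ZMod p)[X]) ^ p + C c₂ * C u * X ^ 2 + C c₁ * X) * hCu
    have hmod : (X : (ZMod p)[X]) ^ p %ₘ f₂
        = C (c₂ * u) * X ^ 2 + C c₁ * X + C (c₀ * u⁻¹) := by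
      rw [modByMonic_eq_of_dvd_sub hm₂ hdvd]
      rw [(modByMonic_eq_self_iff hm₂).2]
      rw [cubic_deg]
      refine lt_of_le_of_lt (degree_add_le _ _) ?_
      rw [max_lt_iff]
      constructor
      · refine lt_of_le_of_lt (degree_add_le _ _) ?_
        rw [max_lt_iff]
        constructor
        · exact lt_of_le_of_lt (degree_C_mul_X_pow_le 2 _) (by norm_num)
        · exact lt_of_le_of_lt (degree_C_mul_X_le _) (by norm_num)
      · exact lt_of_le_of_lt degree_C_le (by norm_num)
    rw [h₂] at hmod
    have hc₂ : c₂' = c₂ * u := by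
      have := congrArg (fun g => coeff g 2) hmod
      simpa [coeff_add, mul_assoc, coeff_C_mul, coeff_X_pow, coeff_X, coeff_C] using this
    rw [hc₂, ← hua, mul_inv]
    rcases eq_or_ne c₂ 0 with h | h
    · simp [h]
    · field_simp
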